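/- Covariance increment bound (increment part of Lemma 3.2): suppose ‖A_{t+1}‖ ≤ A_max. Then the DEKI sample covariances satisfy ‖C_{t+1} − C_t‖_F ≤ 2h(A_max + α)·E_t² + h²(A_max + α)²·E_t³. In particular, if additionally E_0 > 0, h ≤ min(α/(J(A_max + α)²), J/α)·E_0^{-1} and ‖A_s‖ ≤ A_max for all s ≥ 1, then there exists a constant K > 0 depending only on h, α, J and A_max such that ‖C_{t+1} − C_t‖_F ≤ K/(t+1)² for all t ∈ ℕ. -/

import Mathlib

open Matrix BigOperators

set_option synthInstance.maxHeartbeats 1000000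
set_option maxHeartbeats 1000000
set_option linter.unusedVariables false

noncomputable section

/-- Sample mean of an ensemble. -/
def ensMean {d : ℕ} (J : ℕ) (z : Fin J → Fin d → ℝ) : Fin d → ℝ :=
  (J : ℝ)⁻¹ • ∑ j, z j

/-- Ensemble spread `e^{(j)} = z^{(j)} - z̄`. -/
def ensSpread {d : ℕ} (J : ℕ) (z : Fin J → Fin d → ℝ) (j : Fin J) : Fin d → ℝ :=
  z j - ensMean J z

/-- Sample covariance `C = (1/J) ∑_j e^{(j)} (e^{(j)})ᵀ`. -/
def ensCov {d : ℕ} (J : ℕ) (z : Fin J → Fin d → ℝ) : Matrix (Fin d) (Fin d) ℝ :=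
  (J : ℝ)⁻¹ • ∑ j, vecMulVec (ensSpread J z j) (ensSpread J z j)

/-- Squared Euclidean norm of a vector in `ℝ^d`. -/
def enormSq {d : ℕ} (v : Fin d → ℝ) : ℝ := ∑ i, (v i)^2

/-- Ensemble spread energy `E = (1/J)∑_j ‖e^{(j)}‖²`. -/
def ensEnergy {d : ℕ} (J : ℕ) (z : Fin J → Fin d → ℝ) : ℝ :=
  (J : ℝ)⁻¹ * ∑ j, enormSq (ensSpread J z j)

/-- The (Euclidean) operator norm of a square matrix. -/
def opNorm {d : ℕ} (M : Matrix (Fin d) (Fin d) ℝ) : ℝ :=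
  ‖Matrix.toEuclideanCLM (𝕜 := ℝ) M‖

/-- Frobenius norm of a matrix. -/
def frobNorm {n m : ℕ} (M : Matrix (Fin n) (Fin m) ℝ) : ℝ :=
  Real.sqrt (∑ i, ∑ j, (M i j)^2)

/-! ### Auxiliary lemmas -/

lemma enormSq_nonneg {d : ℕ} (v : Fin d → ℝ) : 0 ≤ enormSq v :=
  Finset.sum_nonneg fun _ _ => sq_nonneg _

lemma opNorm_nonneg {d : ℕ} (M : Matrix (Fin d) (Fin d) ℝ) : 0 ≤ opNorm M := norm_nonneg _

lemma frobNorm_nonneg {n m : ℕ} (M : Matrix (Fin n) (Fin m) ℝ) : 0 ≤ frobNorm M :=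
  Real.sqrt_nonneg _

lemma frobNorm_sq {n m : ℕ} (M : Matrix (Fin n) (Fin m) ℝ) :
    frobNorm M ^ 2 = ∑ i, ∑ j, (M i j)^2 :=
  Real.sq_sqrt (by positivity)

section frob
attribute [local instance] Matrix.frobeniusSeminormedAddCommGroup
  Matrix.frobeniusNormedAddCommGroup Matrix.frobeniusNormedRing
  Matrix.frobeniusIsBoundedSMul Matrix.frobeniusNormSMulClass Matrix.frobeniusNormedSpace

lemma frobNorm_eq {n m : ℕ} (M : Matrix (Fin n) (Fin m) ℝ) : frobNorm M = ‖M‖ := by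
  rw [Matrix.frobenius_norm_def, frobNorm]
  simp [Real.norm_eq_abs, sq_abs]
  rw [Real.sqrt_eq_rpow]; norm_num

lemma frobNorm_mul_le {n : ℕ} (X Y : Matrix (Fin n) (Fin n) ℝ) :
    frobNorm (X * Y) ≤ frobNorm X * frobNorm Y := by
  rw [frobNorm_eq, frobNorm_eq, frobNorm_eq]; exact norm_mul_le X Y

lemma frobNorm_comb {n : ℕ} (a b : ℝ) (ha : 0 ≤ a) (hb : 0 ≤ b)
    (X Y : Matrix (Fin n) (Fin n) ℝ) :
    frobNorm (a • X - b • Y) ≤ a * frobNorm X + b * frobNorm Y := by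
  simp only [frobNorm_eq]
  calc ‖a • X - b • Y‖ ≤ ‖a • X‖ + ‖b • Y‖ := norm_sub_le _ _
    _ = a * ‖X‖ + b * ‖Y‖ := by
        rw [norm_smul, norm_smul, Real.norm_eq_abs, Real.norm_eq_abs,
          abs_of_nonneg ha, abs_of_nonneg hb]
end frob

lemma enormSq_mulVec_le_frob {n m : ℕ} (M : Matrix (Fin n) (Fin m) ℝ) (v : Fin m → ℝ) :
    enormSq (M *ᵥ v) ≤ (∑ i, ∑ j, (M i j)^2) * enormSq v := by
  unfold enormSq
  rw [Finset.sum_mul]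
  refine Finset.sum_le_sum fun i _ => ?_
  have := Finset.sum_mul_sq_le_sq_mul_sq Finset.univ (fun j => M i j) v
  simpa [Matrix.mulVec, dotProduct] using this

lemma enormSq_mulVec_le_opNorm {n : ℕ} (M : Matrix (Fin n) (Fin n) ℝ) (v : Fin n → ℝ) :
    enormSq (M *ᵥ v) ≤ (opNorm M)^2 * enormSq v := by
  have h1 : ∀ w : Fin n → ℝ, enormSq w = ‖(WithLp.equiv 2 (Fin n → ℝ)).symm w‖^2 := by
    intro w
    rw [EuclideanSpace.norm_eq, Real.sq_sqrt (by positivity)]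
    simp [enormSq, sq_abs]
  rw [h1, h1]
  have h2 : (WithLp.equiv 2 (Fin n → ℝ)).symm (M *ᵥ v) =
      Matrix.toEuclideanCLM (𝕜 := ℝ) M ((WithLp.equiv 2 (Fin n → ℝ)).symm v) := by
    exact (Matrix.toEuclideanCLM_toLp M v).symm
  rw [h2]
  have h3 := (Matrix.toEuclideanCLM (𝕜 := ℝ) M).le_opNorm ((WithLp.equiv 2 (Fin n → ℝ)).symm v)
  calc ‖Matrix.toEuclideanCLM (𝕜 := ℝ) M ((WithLp.equiv 2 (Fin n → ℝ)).symm v)‖^2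
      ≤ (opNorm M * ‖(WithLp.equiv 2 (Fin n → ℝ)).symm v‖)^2 := by
        apply pow_le_pow_left₀ (norm_nonneg _) h3
    _ = (opNorm M)^2 * ‖(WithLp.equiv 2 (Fin n → ℝ)).symm v‖^2 := by ring

lemma opNorm_B_le {d p : ℕ} (S : Matrix (Fin p) (Fin d) ℝ) (α Amax : ℝ) (hα : 0 ≤ α)
    (hA : opNorm (Sᵀ * S) ≤ Amax) :
    opNorm (Sᵀ * S + α • (1 : Matrix (Fin d) (Fin d) ℝ)) ≤ Amax + α := by
  unfold opNorm at *
  rw [map_add, _root_.map_smul, _root_.map_one]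
  refine (norm_add_le _ _).trans (add_le_add hA ?_)
  refine (ContinuousLinearMap.opNorm_smul_le α
    (1 : EuclideanSpace ℝ (Fin d) →L[ℝ] EuclideanSpace ℝ (Fin d))).trans ?_
  rw [Real.norm_eq_abs, abs_of_nonneg hα]
  calc α * ‖(1 : EuclideanSpace ℝ (Fin d) →L[ℝ] EuclideanSpace ℝ (Fin d))‖ ≤ α * 1 := by
        apply mul_le_mul_of_nonneg_left _ hα
        rw [ContinuousLinearMap.one_def]
        exact ContinuousLinearMap.norm_id_le
    _ = α := mul_one α

lemma ensCov_apply {d J : ℕ} (z : Fin J → Fin d → ℝ) (i k : Fin d) :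
    ensCov J z i k = (J:ℝ)⁻¹ * ∑ j, ensSpread J z j i * ensSpread J z j k := by
  simp [ensCov, Matrix.smul_apply, Matrix.sum_apply, Matrix.vecMulVec_apply]

lemma ensCov_transpose {d J : ℕ} (z : Fin J → Fin d → ℝ) : (ensCov J z)ᵀ = ensCov J z := by
  ext i k
  rw [Matrix.transpose_apply, ensCov_apply, ensCov_apply]
  congr 1
  exact Finset.sum_congr rfl fun j _ => mul_comm _ _

/-- the matrix `B = SᵀS + αI`. -/
def Bmat {d p : ℕ} (S : Matrix (Fin p) (Fin d) ℝ) (α : ℝ) : Matrix (Fin d) (Fin d) ℝ :=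
  Sᵀ * S + α • 1

lemma Bmat_transpose {d p : ℕ} (S : Matrix (Fin p) (Fin d) ℝ) (α : ℝ) :
    (Bmat S α)ᵀ = Bmat S α := by
  unfold Bmat
  rw [Matrix.transpose_add, Matrix.transpose_mul, Matrix.transpose_transpose,
    Matrix.transpose_smul, Matrix.transpose_one]

lemma spread_update {d p J : ℕ} (hJ : 0 < J) (α h : ℝ)
    (S : Matrix (Fin p) (Fin d) ℝ) (u : Fin p → ℝ)
    (zold znew : Fin J → Fin d → ℝ)
    (hupd : ∀ j, znew j = zold j -
      h • ((ensCov J zold) *ᵥ (Sᵀ *ᵥ (S *ᵥ (zold j) - u) + α • zold j))) :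
    ∀ j, ensSpread J znew j =
      ensSpread J zold j - h • ((ensCov J zold * Bmat S α) *ᵥ ensSpread J zold j) := by
  set C := ensCov J zold with hC
  have key : ∀ x : Fin d → ℝ,
      x - h • (C *ᵥ (Sᵀ *ᵥ (S *ᵥ x - u) + α • x)) =
      x - h • ((C * Bmat S α) *ᵥ x) + h • (C *ᵥ (Sᵀ *ᵥ u)) := by
    intro x
    have : (C * Bmat S α) *ᵥ x = C *ᵥ (Sᵀ *ᵥ (S *ᵥ x)) + α • (C *ᵥ x) := by
      rw [← Matrix.mulVec_mulVec]
      unfold Bmat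
      rw [Matrix.add_mulVec, smul_mulVec, Matrix.one_mulVec, Matrix.mulVec_add,
        Matrix.mulVec_smul, ← Matrix.mulVec_mulVec]
    simp only [Matrix.mulVec_sub, Matrix.mulVec_add, Matrix.mulVec_smul]
    rw [this]
    module
  have hnew : ∀ j, znew j = (zold j - h • ((C * Bmat S α) *ᵥ zold j)) + h • (C *ᵥ (Sᵀ *ᵥ u)) := by
    intro j; rw [hupd j, key]
  have hsum : (∑ j, (C * Bmat S α) *ᵥ zold j) = (C * Bmat S α) *ᵥ (∑ j, zold j) := by
    simp_rw [← Matrix.mulVecLin_apply]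
    rw [← map_sum]
  have hmean : ensMean J znew =
      (ensMean J zold - h • ((C * Bmat S α) *ᵥ ensMean J zold)) + h • (C *ᵥ (Sᵀ *ᵥ u)) := by
    unfold ensMean
    rw [Finset.sum_congr rfl fun j _ => hnew j, Finset.sum_add_distrib, Finset.sum_sub_distrib,
      ← Finset.smul_sum, hsum, Finset.sum_const, Finset.card_univ, Fintype.card_fin,
      ← Nat.cast_smul_eq_nsmul ℝ, Matrix.mulVec_smul]
    have hJ' : (J:ℝ) ≠ 0 := by exact_mod_cast hJ.ne'
    match_scalars <;> field_simp
  intro j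
  unfold ensSpread
  rw [hnew j, hmean]
  rw [Matrix.mulVec_sub]
  module

lemma vecMulVec_mulVec_conj {d : ℕ} (M : Matrix (Fin d) (Fin d) ℝ) (a : Fin d → ℝ) :
    vecMulVec (M *ᵥ a) (M *ᵥ a) = M * vecMulVec a a * Mᵀ := by
  ext i k
  simp only [Matrix.mul_apply, Matrix.vecMulVec_apply, Matrix.mulVec, dotProduct,
    Matrix.transpose_apply]
  rw [Finset.sum_mul_sum]
  rw [Finset.sum_comm]
  refine Finset.sum_congr rfl fun m _ => ?_
  rw [Finset.sum_mul]
  exact Finset.sum_congr rfl fun l _ => by ring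

lemma cov_update {d J : ℕ} (M : Matrix (Fin d) (Fin d) ℝ) (zold znew : Fin J → Fin d → ℝ)
    (hs : ∀ j, ensSpread J znew j = M *ᵥ ensSpread J zold j) :
    ensCov J znew = M * ensCov J zold * Mᵀ := by
  unfold ensCov
  rw [Finset.sum_congr rfl fun j _ => by rw [hs j, vecMulVec_mulVec_conj]]
  rw [← Finset.sum_mul, ← Finset.mul_sum, Matrix.mul_smul, Matrix.smul_mul]

lemma cov_diff {d : ℕ} (C B : Matrix (Fin d) (Fin d) ℝ) (h : ℝ)
    (hC : Cᵀ = C) (hB : Bᵀ = B) :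
    (1 - h • (C * B)) * C * (1 - h • (C * B))ᵀ - C
      = h^2 • (C * B * C * B * C) - (2*h) • (C * B * C) := by
  have ht : (1 - h • (C * B))ᵀ = 1 - h • (B * C) := by
    rw [Matrix.transpose_sub, Matrix.transpose_one, Matrix.transpose_smul, Matrix.transpose_mul,
      hC, hB]
  rw [ht]
  simp only [Matrix.mul_sub, Matrix.sub_mul, Matrix.mul_one, Matrix.one_mul,
    Matrix.smul_mul, Matrix.mul_smul, smul_smul, Matrix.mul_assoc]
  module

lemma sum_sq_dot {d J : ℕ} (e : Fin J → Fin d → ℝ) :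
    ∑ i : Fin d, ∑ k : Fin d, (∑ j, e j i * e j k)^2
      = ∑ j, ∑ j', (∑ i, e j i * e j' i)^2 := by
  calc ∑ i : Fin d, ∑ k : Fin d, (∑ j, e j i * e j k)^2
      = ∑ i : Fin d, ∑ k : Fin d, ∑ j, ∑ j', (e j i * e j k) * (e j' i * e j' k) := by
        refine Finset.sum_congr rfl fun i _ => Finset.sum_congr rfl fun k _ => ?_
        rw [sq, Finset.sum_mul_sum]
    _ = ∑ p : Fin d × Fin d, ∑ q : Fin J × Fin J,
          (e q.1 p.1 * e q.1 p.2) * (e q.2 p.1 * e q.2 p.2) := by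
        rw [← Finset.univ_product_univ, Finset.sum_product]
        refine Finset.sum_congr rfl fun i _ => ?_
        refine Finset.sum_congr rfl fun k _ => ?_
        rw [← Finset.univ_product_univ, Finset.sum_product]
    _ = ∑ q : Fin J × Fin J, ∑ p : Fin d × Fin d,
          (e q.1 p.1 * e q.1 p.2) * (e q.2 p.1 * e q.2 p.2) := Finset.sum_comm
    _ = ∑ j, ∑ j', (∑ i, e j i * e j' i)^2 := by
        rw [← Finset.univ_product_univ, Finset.sum_product]
        refine Finset.sum_congr rfl fun j _ => Finset.sum_congr rfl fun j' _ => ?_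
        rw [← Finset.univ_product_univ, Finset.sum_product, sq, Finset.sum_mul_sum]
        exact Finset.sum_congr rfl fun i _ => Finset.sum_congr rfl fun k _ => by ring

lemma ensEnergy_nonneg {d J : ℕ} (z : Fin J → Fin d → ℝ) : 0 ≤ ensEnergy J z := by
  unfold ensEnergy enormSq
  positivity

lemma frobSq_cov_eq {d J : ℕ} (z : Fin J → Fin d → ℝ) :
    ∑ i, ∑ k, (ensCov J z i k)^2
      = ((J:ℝ)⁻¹)^2 * ∑ j, ∑ j', (∑ i, ensSpread J z j i * ensSpread J z j' i)^2 := by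
  simp_rw [ensCov_apply, mul_pow, ← Finset.mul_sum]
  rw [sum_sq_dot]

lemma frobSq_cov_le {d J : ℕ} (z : Fin J → Fin d → ℝ) :
    ∑ i, ∑ k, (ensCov J z i k)^2 ≤ (ensEnergy J z)^2 := by
  rw [frobSq_cov_eq, ensEnergy, mul_pow, sq (∑ j, enormSq (ensSpread J z j)),
    Finset.sum_mul_sum]
  apply mul_le_mul_of_nonneg_left _ (by positivity)
  refine Finset.sum_le_sum fun j _ => Finset.sum_le_sum fun j' _ => ?_
  exact Finset.sum_mul_sq_le_sq_mul_sq Finset.univ _ _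

lemma energy_sq_le_J_frobSq {d J : ℕ} (hJ : 0 < J) (z : Fin J → Fin d → ℝ) :
    (ensEnergy J z)^2 ≤ (J:ℝ) * ∑ i, ∑ k, (ensCov J z i k)^2 := by
  rw [frobSq_cov_eq, ensEnergy, mul_pow]
  have hJ' : (0:ℝ) < (J:ℝ) := by exact_mod_cast hJ
  have h1 : (∑ j, enormSq (ensSpread J z j))^2 ≤ (J:ℝ) * ∑ j, (enormSq (ensSpread J z j))^2 := by
    have := sq_sum_le_card_mul_sum_sq (s := Finset.univ)
      (f := fun j => enormSq (ensSpread J z j))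
    simpa using this
  have h2 : ∑ j, (enormSq (ensSpread J z j))^2
      ≤ ∑ j, ∑ j', (∑ i, ensSpread J z j i * ensSpread J z j' i)^2 := by
    refine Finset.sum_le_sum fun j _ => ?_
    have : (enormSq (ensSpread J z j))^2 = (∑ i, ensSpread J z j i * ensSpread J z j i)^2 := by
      unfold enormSq; simp_rw [sq]
    rw [this]
    exact Finset.single_le_sum (f := fun j' => (∑ i, ensSpread J z j i * ensSpread J z j' i)^2)
      (fun j' _ => sq_nonneg _) (Finset.mem_univ j)
  calc ((J:ℝ)⁻¹)^2 * (∑ j, enormSq (ensSpread J z j))^2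
      ≤ ((J:ℝ)⁻¹)^2 * ((J:ℝ) * ∑ j, (enormSq (ensSpread J z j))^2) := by
        apply mul_le_mul_of_nonneg_left h1 (by positivity)
    _ ≤ ((J:ℝ)⁻¹)^2 * ((J:ℝ) * ∑ j, ∑ j', (∑ i, ensSpread J z j i * ensSpread J z j' i)^2) := by
        apply mul_le_mul_of_nonneg_left _ (by positivity)
        apply mul_le_mul_of_nonneg_left h2 (by positivity)
    _ = (J:ℝ) * (((J:ℝ)⁻¹)^2 * ∑ j, ∑ j', (∑ i, ensSpread J z j i * ensSpread J z j' i)^2) := by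
        ring

lemma sum_quad_eq {d J : ℕ} (hJ : 0 < J) (z : Fin J → Fin d → ℝ)
    (N : Matrix (Fin d) (Fin d) ℝ) :
    ∑ j, ∑ i, ensSpread J z j i * (N *ᵥ ensSpread J z j) i
      = (J:ℝ) * ∑ i, ∑ k, N i k * ensCov J z i k := by
  have hJ' : ((J:ℝ)) ≠ 0 := by exact_mod_cast hJ.ne'
  simp_rw [ensCov_apply, Matrix.mulVec, dotProduct, Finset.mul_sum]
  rw [Finset.sum_comm]
  refine Finset.sum_congr rfl fun i _ => ?_
  rw [Finset.sum_comm]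
  refine Finset.sum_congr rfl fun k _ => Finset.sum_congr rfl fun j _ => ?_
  field_simp

lemma sum_CAC_nonneg {d p : ℕ} (C : Matrix (Fin d) (Fin d) ℝ) (S : Matrix (Fin p) (Fin d) ℝ) :
    0 ≤ ∑ i, ∑ k, (C * (Sᵀ * S)) i k * C i k := by
  have key : ∀ i, ∑ k, (C * (Sᵀ * S)) i k * C i k = ∑ r, ((C * Sᵀ) i r)^2 := by
    intro i
    calc ∑ k, (C * (Sᵀ * S)) i k * C i k
        = ∑ k, ∑ r, ((C * Sᵀ) i r * S r k) * C i k := by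
          refine Finset.sum_congr rfl fun k _ => ?_
          rw [← Matrix.mul_assoc, Matrix.mul_apply (M := C * Sᵀ), Finset.sum_mul]
      _ = ∑ r, ∑ k, ((C * Sᵀ) i r * S r k) * C i k := Finset.sum_comm
      _ = ∑ r, ((C * Sᵀ) i r)^2 := by
          refine Finset.sum_congr rfl fun r _ => ?_
          have : ∑ k, ((C * Sᵀ) i r * S r k) * C i k = (C * Sᵀ) i r * ∑ k, C i k * Sᵀ k r := by
            rw [Finset.mul_sum]
            exact Finset.sum_congr rfl fun k _ => by rw [Matrix.transpose_apply]; ring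
          rw [this, ← Matrix.mul_apply, sq]
  rw [Finset.sum_congr rfl fun i _ => key i]
  positivity

lemma enormSq_sub_smul {d : ℕ} (h : ℝ) (a b : Fin d → ℝ) :
    enormSq (a - h • b) = enormSq a - 2*h*(∑ i, a i * b i) + h^2 * enormSq b := by
  unfold enormSq
  rw [Finset.mul_sum, Finset.mul_sum, ← Finset.sum_sub_distrib, ← Finset.sum_add_distrib]
  refine Finset.sum_congr rfl fun i _ => ?_
  simp only [Pi.sub_apply, Pi.smul_apply, smul_eq_mul]
  ring

lemma frobNorm_cov_le_energy {d J : ℕ} (z : Fin J → Fin d → ℝ) :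
    frobNorm (ensCov J z) ≤ ensEnergy J z := by
  rw [frobNorm]
  calc Real.sqrt (∑ i, ∑ k, (ensCov J z i k)^2)
      ≤ Real.sqrt ((ensEnergy J z)^2) := Real.sqrt_le_sqrt (frobSq_cov_le z)
    _ = ensEnergy J z := Real.sqrt_sq (ensEnergy_nonneg _)

lemma frobNorm_mul_op_le {n : ℕ} (X Mx : Matrix (Fin n) (Fin n) ℝ) (hM : Mxᵀ = Mx) :
    frobNorm (X * Mx) ≤ frobNorm X * opNorm Mx := by
  have hsq : frobNorm (X * Mx)^2 ≤ (frobNorm X * opNorm Mx)^2 := by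
    rw [frobNorm_sq, mul_pow, frobNorm_sq]
    have hrow : ∀ i, ∑ k, ((X * Mx) i k)^2 ≤ (opNorm Mx)^2 * ∑ k, (X i k)^2 := by
      intro i
      have hvect : ∀ k, (X * Mx) i k = (Mxᵀ *ᵥ X i) k := by
        intro k
        rw [Matrix.mulVec, dotProduct, Matrix.mul_apply]
        exact Finset.sum_congr rfl fun l _ => by rw [Matrix.transpose_apply]; ring
      calc ∑ k, ((X * Mx) i k)^2 = enormSq (Mxᵀ *ᵥ X i) := by
            unfold enormSq; exact Finset.sum_congr rfl fun k _ => by rw [hvect k]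
        _ ≤ (opNorm Mxᵀ)^2 * enormSq (X i) := enormSq_mulVec_le_opNorm _ _
        _ = (opNorm Mx)^2 * ∑ k, (X i k)^2 := by rw [hM]; rfl
    calc ∑ i, ∑ k, ((X * Mx) i k)^2
        ≤ ∑ i, (opNorm Mx)^2 * ∑ k, (X i k)^2 := Finset.sum_le_sum fun i _ => hrow i
      _ = (∑ i, ∑ k, (X i k)^2) * (opNorm Mx)^2 := by rw [← Finset.mul_sum]; ring
  nlinarith [frobNorm_nonneg (X * Mx), mul_nonneg (frobNorm_nonneg X) (opNorm_nonneg Mx)]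

lemma cov_increment_step {d p J : ℕ} (hJ : 0 < J) (α h Amax : ℝ) (hα : 0 < α) (hh : 0 < h)
    (hAmax : 0 ≤ Amax)
    (S : Matrix (Fin p) (Fin d) ℝ) (u : Fin p → ℝ) (hS : opNorm (Sᵀ * S) ≤ Amax)
    (zold znew : Fin J → Fin d → ℝ)
    (hupd : ∀ j, znew j = zold j -
      h • ((ensCov J zold) *ᵥ (Sᵀ *ᵥ (S *ᵥ (zold j) - u) + α • zold j))) :
    frobNorm (ensCov J znew - ensCov J zold) ≤
      2*h*(Amax + α) * (ensEnergy J zold)^2 + h^2*(Amax + α)^2 * (ensEnergy J zold)^3 := by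
  have hsp := spread_update hJ α h S u zold znew hupd
  have hsp' : ∀ j, ensSpread J znew j
      = (1 - h • (ensCov J zold * Bmat S α)) *ᵥ ensSpread J zold j := by
    intro j
    rw [hsp j, Matrix.sub_mulVec, Matrix.one_mulVec, smul_mulVec]
  have hcov := cov_update _ zold znew hsp'
  set C := ensCov J zold with hCdef
  set B := Bmat S α with hBdef
  set E := ensEnergy J zold with hEdef
  have hdiff : ensCov J znew - C = h^2 • (C*B*C*B*C) - (2*h) • (C*B*C) := by
    rw [hcov]; exact cov_diff C B h (ensCov_transpose zold) (Bmat_transpose S α)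
  rw [hdiff]
  have hBop : opNorm B ≤ Amax + α := opNorm_B_le S α Amax hα.le hS
  have hBop0 : 0 ≤ opNorm B := opNorm_nonneg _
  have hfC : frobNorm C ≤ E := frobNorm_cov_le_energy zold
  have hfC0 : 0 ≤ frobNorm C := frobNorm_nonneg _
  have hE0 : 0 ≤ E := ensEnergy_nonneg _
  have hAα : (0:ℝ) ≤ Amax + α := by linarith
  have hCBC : frobNorm (C*B*C) ≤ (Amax + α) * E^2 := by
    calc frobNorm (C*B*C) ≤ frobNorm (C*B) * frobNorm C := frobNorm_mul_le _ _
      _ ≤ (frobNorm C * opNorm B) * frobNorm C := by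
          apply mul_le_mul_of_nonneg_right (frobNorm_mul_op_le C B (Bmat_transpose S α)) hfC0
      _ ≤ (E * (Amax + α)) * E :=
          mul_le_mul (mul_le_mul hfC hBop hBop0 hE0) hfC hfC0 (mul_nonneg hE0 hAα)
      _ = (Amax + α) * E^2 := by ring
  have hCBC0 : 0 ≤ frobNorm (C*B*C) := frobNorm_nonneg _
  have hCBCBC : frobNorm (C*B*C*B*C) ≤ (Amax + α)^2 * E^3 := by
    calc frobNorm (C*B*C*B*C) ≤ frobNorm (C*B*C*B) * frobNorm C := frobNorm_mul_le _ _
      _ ≤ (frobNorm (C*B*C) * opNorm B) * frobNorm C := by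
          apply mul_le_mul_of_nonneg_right (frobNorm_mul_op_le _ B (Bmat_transpose S α)) hfC0
      _ ≤ (((Amax + α) * E^2) * (Amax + α)) * E := by
          refine mul_le_mul (mul_le_mul hCBC hBop hBop0 (by positivity)) hfC hfC0 (by positivity)
      _ = (Amax + α)^2 * E^3 := by ring
  calc frobNorm (h^2 • (C*B*C*B*C) - (2*h) • (C*B*C))
      ≤ h^2 * frobNorm (C*B*C*B*C) + (2*h) * frobNorm (C*B*C) :=
        frobNorm_comb _ _ (by positivity) (by positivity) _ _
    _ ≤ 2*h*(Amax + α) * E^2 + h^2*(Amax + α)^2 * E^3 := by nlinarith [sq_nonneg h]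

lemma energy_step {d p J : ℕ} (hJ : 0 < J) (α h Amax : ℝ) (hα : 0 < α) (hh : 0 < h)
    (S : Matrix (Fin p) (Fin d) ℝ) (hS : opNorm (Sᵀ * S) ≤ Amax)
    (zold znew : Fin J → Fin d → ℝ)
    (hs : ∀ j, ensSpread J znew j =
      ensSpread J zold j - h • ((ensCov J zold * Bmat S α) *ᵥ ensSpread J zold j)) :
    ensEnergy J znew ≤ ensEnergy J zold - 2*h*α/(J:ℝ) * (ensEnergy J zold)^2
      + h^2*(Amax+α)^2 * (ensEnergy J zold)^3 := by
  have hJR : (0:ℝ) < (J:ℝ) := by exact_mod_cast hJ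
  have hBop : opNorm (Bmat S α) ≤ Amax + α := opNorm_B_le S α Amax hα.le hS
  set B := Bmat S α with hBdef
  set C := ensCov J zold with hCdef
  set e := ensSpread J zold with hedef
  have hE0 : 0 ≤ ensEnergy J zold := ensEnergy_nonneg _
  have hexp : ensEnergy J znew =
      ensEnergy J zold - 2*h*((J:ℝ)⁻¹ * ∑ j, ∑ i, e j i * ((C * B) *ᵥ e j) i)
        + h^2 * ((J:ℝ)⁻¹ * ∑ j, enormSq ((C * B) *ᵥ e j)) := by
    have h1 : ∀ j, enormSq (ensSpread J znew j)
        = enormSq (e j) - 2*h*(∑ i, e j i * ((C * B) *ᵥ e j) i)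
          + h^2 * enormSq ((C * B) *ᵥ e j) := by
      intro j; rw [hs j, enormSq_sub_smul]
    unfold ensEnergy
    rw [Finset.sum_congr rfl fun j _ => h1 j, Finset.sum_add_distrib, Finset.sum_sub_distrib]
    have e2 : ∑ j, 2*h*(∑ i, e j i * ((C * B) *ᵥ e j) i)
        = 2*h* ∑ j, (∑ i, e j i * ((C * B) *ᵥ e j) i) := by rw [Finset.mul_sum]
    have e3 : ∑ j, h^2 * enormSq ((C * B) *ᵥ e j)
        = h^2 * ∑ j, enormSq ((C * B) *ᵥ e j) := by rw [Finset.mul_sum]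
    rw [e2, e3, hedef]
    ring
  have hquad := sum_quad_eq hJ zold (C * B)
  have hsum : ∑ i, ∑ k, (C * B) i k * C i k
      = (∑ i, ∑ k, (C * (Sᵀ * S)) i k * C i k) + α * ∑ i, ∑ k, (C i k)^2 := by
    rw [Finset.mul_sum, ← Finset.sum_add_distrib]
    refine Finset.sum_congr rfl fun i _ => ?_
    rw [Finset.mul_sum, ← Finset.sum_add_distrib]
    refine Finset.sum_congr rfl fun k _ => ?_
    rw [hBdef]
    show (C * Bmat S α) i k * C i k = _
    unfold Bmat
    rw [Matrix.mul_add, Matrix.mul_smul, Matrix.mul_one, Matrix.add_apply, Matrix.smul_apply,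
      smul_eq_mul]
    ring
  have hCS := sum_CAC_nonneg C S
  have hfrobdown := energy_sq_le_J_frobSq hJ zold
  have hQ : α/(J:ℝ) * (ensEnergy J zold)^2
      ≤ (J:ℝ)⁻¹ * ∑ j, ∑ i, e j i * ((C * B) *ᵥ e j) i := by
    rw [hquad, hsum]
    rw [← hCdef] at hfrobdown
    have hfrob : (ensEnergy J zold)^2 / (J:ℝ) ≤ ∑ i, ∑ k, (C i k)^2 := by
      rw [div_le_iff₀ hJR]
      calc (ensEnergy J zold)^2 ≤ (J:ℝ) * ∑ i, ∑ k, (C i k)^2 := hfrobdown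
        _ = (∑ i, ∑ k, (C i k)^2) * (J:ℝ) := mul_comm _ _
    have hiJ : (0:ℝ) < (J:ℝ)⁻¹ := by positivity
    calc α/(J:ℝ) * (ensEnergy J zold)^2
        = (J:ℝ)⁻¹ * ((J:ℝ) * (α * ((ensEnergy J zold)^2 / (J:ℝ)))) := by
          field_simp
      _ ≤ (J:ℝ)⁻¹ * ((J:ℝ) * ((∑ i, ∑ k, (C * (Sᵀ * S)) i k * C i k) + α * ∑ i, ∑ k, (C i k)^2)) := by
          apply mul_le_mul_of_nonneg_left _ hiJ.le
          apply mul_le_mul_of_nonneg_left _ hJR.le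
          have := mul_le_mul_of_nonneg_left hfrob hα.le
          linarith
  have hfrobup := frobSq_cov_le zold
  rw [← hCdef] at hfrobup
  have hcub : ∀ j, enormSq ((C * B) *ᵥ e j)
      ≤ (ensEnergy J zold)^2 * (Amax+α)^2 * enormSq (e j) := by
    intro j
    have h1 : (C * B) *ᵥ e j = C *ᵥ (B *ᵥ e j) := (Matrix.mulVec_mulVec _ _ _).symm
    rw [h1]
    have hBop0 : 0 ≤ opNorm B := opNorm_nonneg _
    have hc1 := enormSq_mulVec_le_frob C (B *ᵥ e j)
    have hc2 := enormSq_mulVec_le_opNorm B (e j)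
    have hfnn : 0 ≤ ∑ i, ∑ k, (C i k)^2 := by positivity
    have henn : 0 ≤ enormSq (e j) := enormSq_nonneg _
    have hop2 : (opNorm B)^2 ≤ (Amax+α)^2 := pow_le_pow_left₀ hBop0 hBop 2
    calc enormSq (C *ᵥ B *ᵥ e j)
        ≤ (∑ i, ∑ k, (C i k)^2) * enormSq (B *ᵥ e j) := hc1
      _ ≤ (∑ i, ∑ k, (C i k)^2) * ((opNorm B)^2 * enormSq (e j)) :=
          mul_le_mul_of_nonneg_left hc2 hfnn
      _ ≤ (ensEnergy J zold)^2 * ((Amax+α)^2 * enormSq (e j)) := by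
          refine mul_le_mul hfrobup (mul_le_mul_of_nonneg_right hop2 henn) (by positivity) (sq_nonneg _)
      _ = (ensEnergy J zold)^2 * (Amax+α)^2 * enormSq (e j) := by ring
  have hsumcub : (J:ℝ)⁻¹ * ∑ j, enormSq ((C * B) *ᵥ e j)
      ≤ (ensEnergy J zold)^2 * (Amax+α)^2 * ensEnergy J zold := by
    have h1 : ∑ j, enormSq ((C * B) *ᵥ e j)
        ≤ ∑ j, (ensEnergy J zold)^2 * (Amax+α)^2 * enormSq (e j) :=
      Finset.sum_le_sum fun j _ => hcub j
    have h2 : ∑ j, (ensEnergy J zold)^2 * (Amax+α)^2 * enormSq (e j)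
        = (ensEnergy J zold)^2 * (Amax+α)^2 * ∑ j, enormSq (e j) := by
      rw [Finset.mul_sum]
    calc (J:ℝ)⁻¹ * ∑ j, enormSq ((C * B) *ᵥ e j)
        ≤ (J:ℝ)⁻¹ * ((ensEnergy J zold)^2 * (Amax+α)^2 * ∑ j, enormSq (e j)) := by
          apply mul_le_mul_of_nonneg_left _ (by positivity)
          rw [← h2]; exact h1
      _ = (ensEnergy J zold)^2 * (Amax+α)^2 * ((J:ℝ)⁻¹ * ∑ j, enormSq (e j)) := by ring
      _ = (ensEnergy J zold)^2 * (Amax+α)^2 * ensEnergy J zold := by rw [hedef]; rfl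
  rw [hexp]
  have hhl : 0 ≤ 2*h := by linarith
  have t1 := mul_le_mul_of_nonneg_left hQ hhl
  have t2 := mul_le_mul_of_nonneg_left hsumcub (sq_nonneg h)
  have e1 : 2*h*α/(J:ℝ) * (ensEnergy J zold)^2
      = 2*h*(α/(J:ℝ) * (ensEnergy J zold)^2) := by ring
  have e2 : h^2*(Amax+α)^2*(ensEnergy J zold)^3
      = h^2 * ((ensEnergy J zold)^2*(Amax+α)^2*(ensEnergy J zold)) := by ring
  linarith [t1, t2]

lemma energy_decay_aux (c : ℝ) (hc : 0 < c) (E : ℕ → ℝ) (hEnn : ∀ t, 0 ≤ E t)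
    (hE0 : 0 < E 0) (hcE0 : c * E 0 ≤ 1)
    (hrec : ∀ t, E t ≤ E 0 → E (t+1) ≤ E t - c * (E t)^2) :
    ∀ t : ℕ, E t * (1 + c * E 0 * t) ≤ E 0 := by
  intro t
  induction t with
  | zero => simp
  | succ t ih =>
    have hts : (0:ℝ) ≤ c * E 0 * t := by positivity
    have hEt : E t ≤ E 0 := by nlinarith [hEnn t]
    have hstep := hrec t hEt
    have hcx : c * E t ≤ 1 := by nlinarith [hEnn t]
    have hkey : (E t - c * (E t)^2) * (1 + c * E 0 * t + c * E 0) ≤ E 0 := by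
      nlinarith [mul_nonneg (sub_nonneg.2 ih) (sub_nonneg.2 hcx),
        mul_nonneg (mul_nonneg (mul_nonneg hc.le hc.le) (sq_nonneg (E t))) hE0.le]
    have hpos : (0:ℝ) ≤ 1 + c * E 0 * t + c * E 0 := by positivity
    calc E (t+1) * (1 + c * E 0 * (t+1:ℕ))
        = E (t+1) * (1 + c * E 0 * t + c * E 0) := by push_cast; ring
      _ ≤ (E t - c * (E t)^2) * (1 + c * E 0 * t + c * E 0) :=
          mul_le_mul_of_nonneg_right hstep hpos
      _ ≤ E 0 := hkey

/-- Covariance increment bound (increment part of Lemma 3.2):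
`‖C_{t+1} − C_t‖_F ≤ 2h(A_max + α)·E_t² + h²(A_max + α)²·E_t³` whenever
`‖A_{t+1}‖ ≤ A_max`; and under the step-size and initial-energy conditions there is
`K > 0` with `‖C_{t+1} − C_t‖_F ≤ K/(t+1)²` for all `t`. -/
theorem deki_covariance_increment_bound
    {d p J : ℕ} (hd : 0 < d) (hp : 0 < p) (hJ : 0 < J)
    (α h Amax : ℝ) (hα : 0 < α) (hh : 0 < h) (hAmax : 0 < Amax)
    (S : ℕ → Matrix (Fin p) (Fin d) ℝ) (u : ℕ → Fin p → ℝ)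
    (z : ℕ → Fin J → Fin d → ℝ)
    (hupd : ∀ t j, z (t+1) j = z t j -
      h • ((ensCov J (z t)) *ᵥ ((S (t+1))ᵀ *ᵥ ((S (t+1)) *ᵥ (z t j) - u (t+1)) + α • z t j)))
    (hA : ∀ t : ℕ, 1 ≤ t → opNorm ((S t)ᵀ * (S t)) ≤ Amax) :
    (∀ t : ℕ, frobNorm (ensCov J (z (t+1)) - ensCov J (z t)) ≤
        2*h*(Amax + α) * (ensEnergy J (z t))^2
        + h^2*(Amax + α)^2 * (ensEnergy J (z t))^3) ∧
    (0 < ensEnergy J (z 0) →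
      h ≤ min (α / ((J:ℝ) * (Amax + α)^2)) ((J:ℝ)/α) * (ensEnergy J (z 0))⁻¹ →
      ∃ K > 0, ∀ t : ℕ,
        frobNorm (ensCov J (z (t+1)) - ensCov J (z t)) ≤ K / ((t:ℝ) + 1)^2) := by
  have hS_all : ∀ t : ℕ, opNorm ((S (t+1))ᵀ * (S (t+1))) ≤ Amax :=
    fun t => hA (t+1) (Nat.le_add_left 1 t)
  have part1 : ∀ t : ℕ, frobNorm (ensCov J (z (t+1)) - ensCov J (z t)) ≤
      2*h*(Amax + α) * (ensEnergy J (z t))^2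
        + h^2*(Amax + α)^2 * (ensEnergy J (z t))^3 := by
    intro t
    exact cov_increment_step hJ α h Amax hα hh hAmax.le (S (t+1)) (u (t+1)) (hS_all t)
      (z t) (z (t+1)) (hupd t)
  refine ⟨part1, ?_⟩
  intro hE0pos hstep
  set E : ℕ → ℝ := fun t => ensEnergy J (z t) with hEdef
  have hEnn : ∀ t, 0 ≤ E t := fun t => ensEnergy_nonneg _
  have hJR : (0:ℝ) < (J:ℝ) := by exact_mod_cast hJ
  have hAα : (0:ℝ) < Amax + α := by linarith
  set c : ℝ := h * α / (J:ℝ) with hcdef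
  have hc : 0 < c := by rw [hcdef]; positivity
  -- consequences of the step-size bound
  have hhE0 : h * E 0 ≤ min (α / ((J:ℝ) * (Amax + α)^2)) ((J:ℝ)/α) := by
    have := mul_le_mul_of_nonneg_right hstep hE0pos.le
    calc h * E 0 ≤ (min (α / ((J:ℝ) * (Amax + α)^2)) ((J:ℝ)/α) * (E 0)⁻¹) * E 0 := this
      _ = min (α / ((J:ℝ) * (Amax + α)^2)) ((J:ℝ)/α) := by
          field_simp
          exact div_self hE0pos.ne'
  have hhE0a : h * E 0 ≤ α / ((J:ℝ) * (Amax + α)^2) := hhE0.trans (min_le_left _ _)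
  have hhE0b : h * E 0 ≤ (J:ℝ)/α := hhE0.trans (min_le_right _ _)
  have hcE0 : c * E 0 ≤ 1 := by
    rw [hcdef]
    rw [div_mul_eq_mul_div, div_le_one hJR]
    calc h * α * E 0 = (h * E 0) * α := by ring
      _ ≤ ((J:ℝ)/α) * α := mul_le_mul_of_nonneg_right hhE0b hα.le
      _ = (J:ℝ) := by field_simp
  have hkey : h * (Amax+α)^2 * E 0 ≤ α / (J:ℝ) := by
    have h2pos : (0:ℝ) < (Amax+α)^2 := by positivity
    have := mul_le_mul_of_nonneg_right hhE0a h2pos.le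
    calc h * (Amax+α)^2 * E 0 = (h * E 0) * (Amax+α)^2 := by ring
      _ ≤ (α / ((J:ℝ) * (Amax + α)^2)) * (Amax+α)^2 := this
      _ = α / (J:ℝ) := by field_simp
  -- the energy recursion
  have hrec : ∀ t, E t ≤ E 0 → E (t+1) ≤ E t - c * (E t)^2 := by
    intro t hEtE0
    have hs := spread_update hJ α h (S (t+1)) (u (t+1)) (z t) (z (t+1)) (hupd t)
    have es := energy_step hJ α h Amax hα hh (S (t+1)) (hS_all t) (z t) (z (t+1)) hs
    have A1 : h * (Amax+α)^2 * E t ≤ α / (J:ℝ) := by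
      nlinarith [hkey, hEtE0, mul_nonneg hh.le (sq_nonneg (Amax+α))]
    have A2 : (0:ℝ) ≤ h * (E t)^2 := by positivity
    have haux : h^2*(Amax+α)^2*(E t)^3 ≤ h*α/(J:ℝ) * (E t)^2 := by
      have key : (h * (Amax+α)^2 * E t) * (h * (E t)^2) ≤ (α/(J:ℝ)) * (h * (E t)^2) :=
        mul_le_mul_of_nonneg_right A1 A2
      have e1 : (h * (Amax+α)^2 * E t) * (h * (E t)^2) = h^2*(Amax+α)^2*(E t)^3 := by ring
      have e2 : (α/(J:ℝ)) * (h * (E t)^2) = h*α/(J:ℝ) * (E t)^2 := by ring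
      rw [e1, e2] at key
      exact key
    have hcc : c * (E t)^2 = h*α/(J:ℝ) * (E t)^2 := by rw [hcdef]
    rw [hcc]
    have e2 : 2*h*α/(J:ℝ) * (E t)^2 = 2 * (h*α/(J:ℝ) * (E t)^2) := by ring
    have := es
    linarith [this, haux]
  have decay := energy_decay_aux c hc E hEnn hE0pos hcE0 hrec
  -- pointwise 1/(t+1) bound for the energy
  have hb : ∀ t : ℕ, E t * (c * ((t:ℝ)+1)) ≤ 1 := by
    intro t
    have hd := decay t
    have hmono : E t * (c * E 0 * ((t:ℝ)+1)) ≤ E 0 := by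
      nlinarith [hEnn t, hcE0, Nat.cast_nonneg (α := ℝ) t]
    nlinarith [hE0pos, hmono, hEnn t]
  set K : ℝ := 2*h*(Amax+α)*(1/c)^2 + h^2*(Amax+α)^2*(1/c)^3 with hKdef
  have hKpos : 0 < K := by
    rw [hKdef]
    have i1 : 0 < (1/c) := one_div_pos.2 hc
    have : 0 < 2*h*(Amax+α)*(1/c)^2 := by positivity
    have : 0 < h^2*(Amax+α)^2*(1/c)^3 := by positivity
    linarith
  refine ⟨K, hKpos, ?_⟩
  intro t
  have hT : (0:ℝ) < (t:ℝ)+1 := by positivity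
  have hT1 : (1:ℝ) ≤ (t:ℝ)+1 := by
    have : (0:ℝ) ≤ (t:ℝ) := Nat.cast_nonneg t
    linarith
  have hEt : E t ≤ 1/(c*((t:ℝ)+1)) := by
    rw [le_div_iff₀ (mul_pos hc hT)]
    exact hb t
  have hq2 : (E t)^2 ≤ (1/(c*((t:ℝ)+1)))^2 := pow_le_pow_left₀ (hEnn t) hEt 2
  have hq3 : (E t)^3 ≤ (1/(c*((t:ℝ)+1)))^3 := pow_le_pow_left₀ (hEnn t) hEt 3
  have hcne : c ≠ 0 := hc.ne'
  have hTne : ((t:ℝ)+1) ≠ 0 := hT.ne'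
  have hcube : (1/(c*((t:ℝ)+1)))^3 ≤ (1/c)^3 * (1/((t:ℝ)+1)^2) := by
    have e1 : (1/(c*((t:ℝ)+1)))^3 = (1/c)^3 * (1/((t:ℝ)+1)^3) := by
      field_simp
    rw [e1]
    apply mul_le_mul_of_nonneg_left _ (by positivity)
    apply one_div_le_one_div_of_le (by positivity)
    calc ((t:ℝ)+1)^2 = ((t:ℝ)+1)^2 * 1 := by ring
      _ ≤ ((t:ℝ)+1)^2 * ((t:ℝ)+1) := by
          apply mul_le_mul_of_nonneg_left hT1 (by positivity)
      _ = ((t:ℝ)+1)^3 := by ring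
  have hsq : (1/(c*((t:ℝ)+1)))^2 = (1/c)^2 * (1/((t:ℝ)+1)^2) := by
    field_simp
  calc frobNorm (ensCov J (z (t+1)) - ensCov J (z t))
      ≤ 2*h*(Amax + α) * (E t)^2 + h^2*(Amax + α)^2 * (E t)^3 := part1 t
    _ ≤ 2*h*(Amax + α) * ((1/(c*((t:ℝ)+1)))^2) + h^2*(Amax + α)^2 * ((1/(c*((t:ℝ)+1)))^3) := by
        have c1 : (0:ℝ) ≤ 2*h*(Amax+α) := by positivity
        have c2 : (0:ℝ) ≤ h^2*(Amax+α)^2 := by positivity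
        exact add_le_add (mul_le_mul_of_nonneg_left hq2 c1) (mul_le_mul_of_nonneg_left hq3 c2)
    _ ≤ 2*h*(Amax + α) * ((1/c)^2 * (1/((t:ℝ)+1)^2))
        + h^2*(Amax + α)^2 * ((1/c)^3 * (1/((t:ℝ)+1)^2)) := by
        have c2 : (0:ℝ) ≤ h^2*(Amax+α)^2 := by positivity
        refine add_le_add (le_of_eq ?_) (mul_le_mul_of_nonneg_left hcube c2)
        rw [hsq]
    _ = K / ((t:ℝ)+1)^2 := by
        rw [hKdef]
        field_simp
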